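/- Let T be a finite nonabelian simple group satisfying 3^{1/3}·a(T)·a(Aut(T)) < |T| (equivalently 3·a(T)^3·a(Aut(T))^3 < |T|^3). Then there is no abelian group Γ admitting a regular embedding into Hol(T^m) for any m ≥ 1. -/

import Mathlib

/-- The holomorph `Hol(G) = G ⋊ Aut(G)`. -/
abbrev Hol (G : Type*) [Group G] : Type _ :=
  G ⋊[MonoidHom.id (MulAut G)] MulAut G

/-- The natural action of `Hol(G)` on `G`: `[g, α] · x = g * α x`. -/
def holAct {G : Type*} [Group G] (h : Hol G) (x : G) : G :=
  h.left * h.right x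

/-- `maxAb G` is the maximal order of an abelian subgroup of `G`. -/
noncomputable def maxAb (G : Type*) [Group G] : ℕ :=
  sSup {n | ∃ H : Subgroup G, IsMulCommutative H ∧ Nat.card H = n}

set_option linter.unusedSectionVars false


section H1
variable {G : Type*} {H : Type*} [Group G] [Group H]

lemma isComm_of_le {A B : Subgroup G} (hA : IsMulCommutative A) (h : B ≤ A) :
    IsMulCommutative B := by
  refine ⟨⟨fun a b => ?_⟩⟩
  exact Subtype.ext (@Subgroup.mul_comm_of_mem_isMulCommutative _ _ A hA a.1 b.1 (h a.2) (h b.2))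

lemma isComm_map (f : G →* H) {A : Subgroup G} (hA : IsMulCommutative A) :
    IsMulCommutative (A.map f) := by
  refine ⟨⟨fun a b => ?_⟩⟩
  obtain ⟨x, hx, hxe⟩ := a.2
  obtain ⟨y, hy, hye⟩ := b.2
  have := @Subgroup.mul_comm_of_mem_isMulCommutative _ _ A hA x y hx hy
  apply Subtype.ext
  show a.1 * b.1 = b.1 * a.1
  rw [← hxe, ← hye, ← map_mul, ← map_mul, this]

lemma isComm_range (f : G →* H) (hc : ∀ a b : G, a * b = b * a) :
    IsMulCommutative f.range := by
  refine ⟨⟨fun a b => ?_⟩⟩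
  obtain ⟨x, hxe⟩ := a.2
  obtain ⟨y, hye⟩ := b.2
  apply Subtype.ext
  show a.1 * b.1 = b.1 * a.1
  rw [← hxe, ← hye, ← map_mul, ← map_mul, hc]

lemma card_le_mul [Finite G] (f : G →* H) (a b : ℕ)
    (hker : ∀ A : Subgroup G, IsMulCommutative A → A ≤ f.ker → Nat.card A ≤ a)
    (hrng : ∀ B : Subgroup H, IsMulCommutative B → Nat.card B ≤ b)
    (A : Subgroup G) (hA : IsMulCommutative A) : Nat.card A ≤ a * b := by
  set f' := f.comp A.subtype with hf'
  have hcard : Nat.card A = Nat.card (A ⧸ f'.ker) * Nat.card f'.ker :=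
    Subgroup.card_eq_card_quotient_mul_card_subgroup f'.ker
  have hq : Nat.card (A ⧸ f'.ker) = Nat.card f'.range :=
    Nat.card_congr (QuotientGroup.quotientKerEquivRange f').toEquiv
  have hAcomm : ∀ x y : A, x * y = y * x := fun x y =>
    Subtype.ext (Subgroup.mul_comm_of_mem_isMulCommutative (H := A) x.2 y.2)
  have hk : Nat.card f'.ker ≤ a := by
    have hle : f'.ker.map A.subtype ≤ A := Subgroup.map_subtype_le _
    have hkk : f'.ker.map A.subtype ≤ f.ker := by
      rintro x ⟨y, hy, rfl⟩
      exact hy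
    have := hker _ (isComm_of_le hA hle) hkk
    rwa [← Nat.card_congr (Subgroup.equivMapOfInjective f'.ker A.subtype
      A.subtype_injective).toEquiv] at this
  have hr : Nat.card f'.range ≤ b := hrng _ (isComm_range f' hAcomm)
  calc Nat.card A = Nat.card f'.range * Nat.card f'.ker := by rw [hcard, hq]
    _ ≤ b * a := Nat.mul_le_mul hr hk
    _ = a * b := Nat.mul_comm _ _

lemma pi_bound {ι : Type*} [Fintype ι] [DecidableEq ι] {M : ι → Type*}
    [∀ i, Group (M i)] [∀ i, Finite (M i)] (b : ι → ℕ)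
    (hb : ∀ i (B : Subgroup (M i)), IsMulCommutative B → Nat.card B ≤ b i)
    (A : Subgroup (∀ i, M i)) (hA : IsMulCommutative A) :
    Nat.card A ≤ ∏ i, b i := by
  set Bi := fun i => A.map (Pi.evalMonoidHom M i) with hBi
  have hmem : ∀ (x : A) i, x.1 i ∈ Bi i := fun x i => ⟨x.1, x.2, rfl⟩
  have hinj : Function.Injective (fun (x : A) => fun i => (⟨x.1 i, hmem x i⟩ : Bi i)) := by
    intro x y hxy
    apply Subtype.ext; funext i
    exact congrArg Subtype.val (congrFun hxy i)
  calc Nat.card A ≤ Nat.card (∀ i, Bi i) := Nat.card_le_card_of_injective _ hinj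
    _ = ∏ i, Nat.card (Bi i) := Nat.card_pi
    _ ≤ ∏ i, b i := Finset.prod_le_prod' (fun i _ => hb i _ (isComm_map _ hA))

end H1

section MaxAbLemmas
variable {G : Type*} {H : Type*} [Group G] [Group H]

lemma bot_isComm : IsMulCommutative (⊥ : Subgroup G) := by
  refine ⟨⟨fun a b => ?_⟩⟩
  apply Subtype.ext
  have ha := a.2; have hb := b.2
  rw [Subgroup.mem_bot] at ha hb
  show a.1 * b.1 = b.1 * a.1
  rw [ha, hb]

/-- Any abelian subgroup has card at most `maxAb`. -/
lemma le_maxAb [Finite G] (A : Subgroup G) (hA : IsMulCommutative A) :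
    Nat.card A ≤ maxAb G := by
  apply le_csSup
  · exact ⟨Nat.card G, fun n hn => by
      obtain ⟨B, _, hB⟩ := hn; exact hB ▸ Subgroup.card_le_card_group B⟩
  · exact ⟨A, hA, rfl⟩

/-- `maxAb` is attained. -/
lemma maxAb_spec (G : Type*) [Group G] [Finite G] :
    ∃ A : Subgroup G, IsMulCommutative A ∧ Nat.card A = maxAb G := by
  have h1 : (1 : ℕ) ∈ {n | ∃ A : Subgroup G, IsMulCommutative A ∧ Nat.card A = n} :=
    ⟨⊥, bot_isComm, by simp⟩
  have h2 : BddAbove {n | ∃ A : Subgroup G, IsMulCommutative A ∧ Nat.card A = n} :=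
    ⟨Nat.card G, fun n hn => by
      obtain ⟨B, _, hB⟩ := hn; exact hB ▸ Subgroup.card_le_card_group B⟩
  exact Nat.sSup_mem ⟨1, h1⟩ h2

lemma card_le_of_faithful [Finite H] (f : G →* H) (hf : Function.Injective f)
    (hc : ∀ a b : G, a * b = b * a) (b : ℕ)
    (hb : ∀ B : Subgroup H, IsMulCommutative B → Nat.card B ≤ b) :
    Nat.card G ≤ b := by
  have h1 : Nat.card G = Nat.card f.range := Nat.card_congr (MonoidHom.ofInjective hf).toEquiv
  rw [h1]
  exact hb f.range (isComm_range f hc)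

end MaxAbLemmas


lemma cube_le_three_pow : ∀ k : ℕ, 1 ≤ k → k ^ 3 ≤ 3 ^ k := by
  intro k
  induction k with
  | zero => intro h; omega
  | succ n ih =>
    intro _
    match n, ih with
    | 0, _ => norm_num
    | 1, _ => norm_num
    | 2, _ => norm_num
    | (m+3), ih =>
      have h1 : (m+3) ^ 3 ≤ 3 ^ (m+3) := ih (by omega)
      have h2 : (m+4) ^ 3 ≤ 3 * (m+3) ^ 3 := by nlinarith [m.zero_le, sq_nonneg m, pow_pos (Nat.succ_pos 2) m]
      calc (m+4) ^ 3 ≤ 3 * (m+3) ^ 3 := h2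
        _ ≤ 3 * 3 ^ (m+3) := by omega
        _ = 3 ^ (m+4) := by ring

/-- An abelian group acting faithfully on a finite set of size `n` has order `a` with
`a^3 ≤ 3^n`. -/
lemma abelian_faithful_card_cube_le :
    ∀ (n : ℕ) (X : Type) [Finite X], Nat.card X = n →
    ∀ (A : Type) [Group A] [MulAction A X]
      (_ : ∀ a b : A, a * b = b * a)
      (_ : ∀ a : A, (∀ x : X, a • x = x) → a = 1),
      (Nat.card A) ^ 3 ≤ 3 ^ n := by
  intro n
  induction n using Nat.strong_induction_on with
  | _ n ih =>
    intro X _ hX A _ _ hcomm hfaith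
    have hAfin : Finite A := by
      have : Function.Injective (MulAction.toPermHom A X) := by
        rw [← MonoidHom.ker_eq_bot_iff, eq_bot_iff]
        intro a ha
        rw [Subgroup.mem_bot]
        simp only [MonoidHom.mem_ker] at ha
        exact hfaith a (fun x => by
          have := congrFun (congrArg (fun (e : Equiv.Perm X) => e.toFun) ha) x
          simpa [MulAction.toPermHom] using this)
      exact Finite.of_injective _ this
    rcases isEmpty_or_nonempty X with hE | hNE
    · have : ∀ a : A, a = 1 := fun a => hfaith a (fun x => (hE.false x).elim)
      have : Subsingleton A := ⟨fun a b => by rw [this a, this b]⟩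
      rw [Nat.card_eq_one_iff_unique.2 ⟨this, ⟨1⟩⟩]
      exact Nat.one_le_pow _ _ (by norm_num) |>.trans (Nat.pow_le_pow_right (by norm_num) (Nat.zero_le n)) |>.trans_eq rfl
    · obtain ⟨x⟩ := hNE
      -- orbit and stabilizer
      set O := MulAction.orbit A x with hO
      set S := MulAction.stabilizer A x with hS
      -- stabilizer fixes the orbit pointwise
      have hfix : ∀ (s : S) (y : X), y ∈ O → s.1 • y = y := by
        rintro s y ⟨a, rfl⟩
        calc s.1 • a • x = a • s.1 • x := by
              rw [smul_smul, smul_smul, hcomm]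
        _ = a • x := by rw [s.2]
      -- S acts on the complement of O
      have hpres : ∀ (s : S) (y : X), y ∉ O → s.1 • y ∉ O := by
        intro s y hy hmem
        apply hy
        have : s.1⁻¹ • s.1 • y ∈ O := by
          obtain ⟨a, ha⟩ := hmem
          have ha' : a • x = s.1 • y := ha
          refine ⟨s.1⁻¹ * a, ?_⟩
          show (s.1⁻¹ * a) • x = s.1⁻¹ • s.1 • y
          rw [mul_smul, ha']
        rwa [inv_smul_smul] at this
      let Y := {y : X // y ∉ O}
      letI : MulAction S Y :=
        { smul := fun s y => ⟨s.1 • y.1, hpres s y.1 y.2⟩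
          one_smul := fun y => Subtype.ext (one_smul A y.1)
          mul_smul := fun s t y => Subtype.ext (mul_smul s.1 t.1 y.1) }
      have hsmulY : ∀ (s : S) (y : Y), (s • y).1 = s.1 • y.1 := fun _ _ => rfl
      -- faithfulness of S on Y
      have hfaithY : ∀ s : S, (∀ y : Y, s • y = y) → s = 1 := by
        intro s hs
        apply Subtype.ext
        apply hfaith
        intro y
        by_cases hy : y ∈ O
        · exact hfix s y hy
        · exact congrArg Subtype.val (hs ⟨y, hy⟩)
      have hcommS : ∀ a b : S, a * b = b * a := fun a b =>
        Subtype.ext (hcomm a.1 b.1)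
      -- cardinalities
      have hXfin : Finite X := ‹_›
      have hOfin : Finite O := Subtype.finite
      have hYfin : Finite Y := Subtype.finite
      have hcards : Nat.card O + Nat.card Y = n := by
        rw [← hX]
        classical
        haveI : Fintype X := Fintype.ofFinite X
        rw [Nat.card_eq_fintype_card (α := X), Nat.card_eq_fintype_card, Nat.card_eq_fintype_card]
        have h1 : Fintype.card Y = Fintype.card X - Fintype.card {y : X // y ∈ O} :=
          Fintype.card_subtype_compl _
        have h2 : Fintype.card {y : X // y ∈ O} ≤ Fintype.card X := Fintype.card_subtype_le _
        have h3 : Fintype.card O = Fintype.card {y : X // y ∈ O} := rfl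
        omega
      have hOpos : 1 ≤ Nat.card O :=
        Nat.one_le_iff_ne_zero.2 (Nat.card_ne_zero.2 ⟨⟨⟨x, MulAction.mem_orbit_self x⟩⟩, hOfin⟩)
      -- orbit-stabilizer
      have hos : Nat.card A = Nat.card O * Nat.card S := by
        rw [Subgroup.card_eq_card_quotient_mul_card_subgroup S,
          Nat.card_congr (MulAction.orbitEquivQuotientStabilizer A x)]
      -- induction hypothesis on Y
      have hY : Nat.card Y < n := by omega
      have ihS := ih (Nat.card Y) hY Y rfl S hcommS hfaithY
      have hOcube : (Nat.card O) ^ 3 ≤ 3 ^ (Nat.card O) := cube_le_three_pow _ hOpos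
      calc (Nat.card A) ^ 3 = (Nat.card O) ^ 3 * (Nat.card S) ^ 3 := by rw [hos]; ring
        _ ≤ 3 ^ (Nat.card O) * 3 ^ (Nat.card Y) := Nat.mul_le_mul hOcube ihS
        _ = 3 ^ (Nat.card O + Nat.card Y) := (pow_add 3 _ _).symm
        _ = 3 ^ n := by rw [hcards]


section Struct
variable {T : Type*} [Group T] [IsSimpleGroup T] {m : ℕ}

/-- The `i`-th coordinate subgroup of `T^m`. -/
def Ti (T : Type*) [Group T] {m : ℕ} (i : Fin m) : Subgroup (Fin m → T) :=
  (MonoidHom.mulSingle (fun _ => T) i).range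

lemma mem_Ti {i : Fin m} {g : Fin m → T} : g ∈ Ti T i ↔ ∀ j, j ≠ i → g j = 1 := by
  constructor
  · rintro ⟨t, rfl⟩ j hj
    rw [MonoidHom.mulSingle_apply]
    exact Pi.mulSingle_eq_of_ne (M := fun _ => T) hj t
  · intro h
    refine ⟨g i, ?_⟩
    show Pi.mulSingle i (g i) = g
    funext j
    by_cases hj : j = i
    · subst hj; simp
    · rw [Pi.mulSingle_eq_of_ne hj, h j hj]

lemma Ti_eq_single {i : Fin m} {g : Fin m → T} (h : g ∈ Ti T i) :
    Pi.mulSingle i (g i) = g := by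
  rw [mem_Ti] at h
  funext j
  by_cases hj : j = i
  · subst hj; simp
  · rw [Pi.mulSingle_eq_of_ne hj, h j hj]

lemma single_mem_Ti {i : Fin m} (t : T) : Pi.mulSingle i t ∈ Ti T i := ⟨t, rfl⟩

lemma Ti_normal (i : Fin m) : (Ti T i).Normal := by
  constructor
  intro n hn g
  rw [mem_Ti] at hn ⊢
  intro j hj
  simp [Pi.mul_apply, Pi.inv_apply, hn j hj]

lemma Ti_injective (hT : Nontrivial T) {i j : Fin m} (h : Ti T i ≤ Ti T j) : i = j := by
  by_contra hij
  obtain ⟨t, ht⟩ := exists_ne (1 : T)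
  have := (mem_Ti.1 (h (single_mem_Ti t))) i hij
  rw [Pi.mulSingle_eq_same] at this
  exact ht this

lemma center_eq_bot (hna : ∃ a b : T, a * b ≠ b * a) :
    Subgroup.center T = ⊥ := by
  rcases IsSimpleGroup.eq_bot_or_eq_top_of_normal (Subgroup.center T) inferInstance with h | h
  · exact h
  · exfalso
    obtain ⟨a, b, hab⟩ := hna
    exact hab (((Subgroup.mem_center_iff).1 (h ▸ Subgroup.mem_top a) b).symm)

lemma exists_noncomm (hna : ∃ a b : T, a * b ≠ b * a) {x : T} (hx : x ≠ 1) :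
    ∃ t : T, t * x ≠ x * t := by
  by_contra h
  push_neg at h
  have : x ∈ Subgroup.center T := Subgroup.mem_center_iff.2 fun g => (h g).symm ▸ rfl
  rw [center_eq_bot hna, Subgroup.mem_bot] at this
  exact hx this

/-- Key: a nontrivial normal subgroup of `T^m` containing an element with nontrivial
`i`-th coordinate contains the whole `i`-th factor. -/
lemma claimA (hna : ∃ a b : T, a * b ≠ b * a) (N : Subgroup (Fin m → T)) (hN : N.Normal)
    {g : Fin m → T} (hg : g ∈ N) {i : Fin m} (hi : g i ≠ 1) : Ti T i ≤ N := by
  obtain ⟨t, ht⟩ := exists_noncomm hna hi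
  set c := Pi.mulSingle i t * g * (Pi.mulSingle i t)⁻¹ * g⁻¹ with hc
  have hcN : c ∈ N := by
    have h1 : Pi.mulSingle i t * g * (Pi.mulSingle i t)⁻¹ ∈ N := hN.conj_mem g hg _
    exact mul_mem h1 (inv_mem hg)
  have hcTi : c ∈ Ti T i := by
    rw [mem_Ti]
    intro j hj
    simp [hc, Pi.mul_apply, Pi.inv_apply, Pi.mulSingle_eq_of_ne hj]
  have hci : c i = t * g i * t⁻¹ * (g i)⁻¹ := by
    simp [hc, Pi.mul_apply, Pi.inv_apply]
  have hcine : c i ≠ 1 := by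
    rw [hci]
    intro hcc
    apply ht
    rwa [mul_inv_eq_one, mul_inv_eq_iff_eq_mul] at hcc
  -- the comap of N under mulSingle
  set P := N.comap (MonoidHom.mulSingle (fun _ => T) i) with hP
  have hPnormal : P.Normal := by
    constructor
    intro x hx s
    have : MonoidHom.mulSingle (fun _ => T) i (s * x * s⁻¹)
        = (Pi.mulSingle i s) * (Pi.mulSingle i x) * (Pi.mulSingle i s)⁻¹ := by
      rw [map_mul, map_mul, map_inv]; rfl
    show MonoidHom.mulSingle (fun _ => T) i (s * x * s⁻¹) ∈ N
    rw [this]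
    exact hN.conj_mem _ hx _
  have hPne : P ≠ ⊥ := by
    intro hbot
    have : c i ∈ P := by
      show MonoidHom.mulSingle (fun _ => T) i (c i) ∈ N
      have : MonoidHom.mulSingle (fun _ => T) i (c i) = c := Ti_eq_single hcTi
      rw [this]; exact hcN
    rw [hbot, Subgroup.mem_bot] at this
    exact hcine this
  have hPtop : P = ⊤ := by
    rcases IsSimpleGroup.eq_bot_or_eq_top_of_normal P hPnormal with h | h
    · exact absurd h hPne
    · exact h
  rintro x ⟨s, rfl⟩
  have hs : s ∈ P := hPtop ▸ Subgroup.mem_top s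
  exact hs

lemma claimB (hna : ∃ a b : T, a * b ≠ b * a) (φ : MulAut (Fin m → T)) (i : Fin m) :
    ∃ j, (Ti T i).map φ.toMonoidHom = Ti T j := by
  have hT : Nontrivial T := by
    obtain ⟨a, b, hab⟩ := hna
    refine ⟨a, 1, fun h => hab ?_⟩
    rw [h, one_mul, mul_one]
  -- the image contains some Ti j
  have step : ∀ (ψ : MulAut (Fin m → T)) (k : Fin m),
      ∃ j, Ti T j ≤ (Ti T k).map ψ.toMonoidHom := by
    intro ψ k
    obtain ⟨s, hs⟩ := exists_ne (1 : T)
    have hmem : ψ (Pi.mulSingle k s) ∈ (Ti T k).map ψ.toMonoidHom :=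
      ⟨_, single_mem_Ti s, rfl⟩
    have hne : ψ (Pi.mulSingle k s) ≠ 1 := by
      intro h
      apply hs
      have := ψ.injective (h.trans (map_one ψ).symm)
      have := congrFun this k
      rwa [Pi.mulSingle_eq_same] at this
    obtain ⟨j, hj⟩ : ∃ j, ψ (Pi.mulSingle k s) j ≠ 1 := by
      by_contra h
      push_neg at h
      exact hne (funext h)
    have hnorm : ((Ti T k).map ψ.toMonoidHom).Normal :=
      (Ti_normal k).map ψ.toMonoidHom ψ.surjective
    exact ⟨j, claimA hna _ hnorm hmem hj⟩
  obtain ⟨j, hj⟩ := step φ i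
  obtain ⟨k, hk⟩ := step φ⁻¹ j
  -- map φ⁻¹ (Ti j) ≤ Ti i
  have h2 : (Ti T j).map φ⁻¹.toMonoidHom ≤ Ti T i := by
    rintro x ⟨y, hy, rfl⟩
    obtain ⟨z, hz, hzy⟩ := hj hy
    have : φ⁻¹.toMonoidHom y = z := by
      rw [← hzy]
      exact φ.symm_apply_apply z
    rwa [this]
  have hki : k = i := Ti_injective hT (le_trans hk h2)
  subst hki
  have h3 : (Ti T j).map φ⁻¹.toMonoidHom = Ti T k := le_antisymm h2 hk
  refine ⟨j, le_antisymm ?_ hj⟩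
  rintro x ⟨y, hy, rfl⟩
  rw [← h3] at hy
  obtain ⟨z, hz, hzy⟩ := hy
  have hyz : φ.toMonoidHom y = z := by
    rw [← hzy]
    exact φ.apply_symm_apply z
  rwa [hyz]


lemma nontrivial_of_hna (hna : ∃ a b : T, a * b ≠ b * a) : Nontrivial T := by
  obtain ⟨a, b, hab⟩ := hna
  refine ⟨a, 1, fun h => hab ?_⟩
  rw [h, one_mul, mul_one]

variable (hna : ∃ a b : T, a * b ≠ b * a)

lemma Ti_inj_eq (hna : ∃ a b : T, a * b ≠ b * a) {i j : Fin m} (h : Ti T i = Ti T j) : i = j :=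
  Ti_injective (nontrivial_of_hna hna) h.le

/-- The permutation of coordinates induced by an automorphism. -/
noncomputable def sigmaAut (φ : MulAut (Fin m → T)) (i : Fin m) : Fin m :=
  (claimB hna φ i).choose

lemma sigmaAut_spec (φ : MulAut (Fin m → T)) (i : Fin m) :
    (Ti T i).map φ.toMonoidHom = Ti T (sigmaAut hna φ i) :=
  (claimB hna φ i).choose_spec

lemma sigmaAut_one (i : Fin m) : sigmaAut hna (1 : MulAut (Fin m → T)) i = i := by
  apply Ti_inj_eq hna
  rw [← sigmaAut_spec hna 1 i]
  have h1 : (1 : MulAut (Fin m → T)).toMonoidHom = MonoidHom.id _ := rfl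
  rw [h1, Subgroup.map_id]

lemma sigmaAut_mul (φ ψ : MulAut (Fin m → T)) (i : Fin m) :
    sigmaAut hna (φ * ψ) i = sigmaAut hna φ (sigmaAut hna ψ i) := by
  apply Ti_inj_eq hna
  rw [← sigmaAut_spec hna (φ * ψ) i, ← sigmaAut_spec hna φ _, ← sigmaAut_spec hna ψ i,
    Subgroup.map_map]
  rfl

/-- The homomorphism from `Aut(T^m)` to `S_m`. -/
noncomputable def PhiHom : MulAut (Fin m → T) →* Equiv.Perm (Fin m) :=
  MonoidHom.mk' (fun φ =>
    { toFun := sigmaAut hna φ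
      invFun := sigmaAut hna φ⁻¹
      left_inv := fun i => by
        rw [← sigmaAut_mul hna, inv_mul_cancel, sigmaAut_one hna]
      right_inv := fun i => by
        rw [← sigmaAut_mul hna, mul_inv_cancel, sigmaAut_one hna] })
    (fun φ ψ => Equiv.ext fun i => sigmaAut_mul hna φ ψ i)

lemma ker_fix {φ : MulAut (Fin m → T)} (hφ : φ ∈ (PhiHom hna (m := m)).ker) (i : Fin m) :
    (Ti T i).map φ.toMonoidHom = Ti T i := by
  rw [sigmaAut_spec hna φ i]
  congr 1
  have h1 : sigmaAut hna φ i = (PhiHom hna φ) i := rfl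
  rw [h1, MonoidHom.mem_ker.1 hφ]
  rfl

/-- Components of a coordinate-preserving automorphism. -/
def autComp (φ : MulAut (Fin m → T)) (i : Fin m) (t : T) : T :=
  φ (Pi.mulSingle i t) i

lemma autComp_single {φ : MulAut (Fin m → T)} (hφ : ∀ i, (Ti T i).map φ.toMonoidHom = Ti T i)
    (i : Fin m) (t : T) :
    Pi.mulSingle i (φ (Pi.mulSingle i t) i) = φ (Pi.mulSingle i t) := by
  have hmem : φ (Pi.mulSingle i t) ∈ Ti T i := by
    rw [← hφ i]
    exact ⟨Pi.mulSingle i t, single_mem_Ti t, rfl⟩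
  exact Ti_eq_single hmem

lemma autComp_mul (φ : MulAut (Fin m → T)) (i : Fin m) (t s : T) :
    autComp φ i (t * s) = autComp φ i t * autComp φ i s := by
  unfold autComp
  rw [Pi.mulSingle_mul, map_mul, Pi.mul_apply]

lemma autComp_inverse {φ : MulAut (Fin m → T)}
    (hφ : ∀ i, (Ti T i).map φ.toMonoidHom = Ti T i) (i : Fin m) (t : T) :
    autComp φ⁻¹ i (autComp φ i t) = t := by
  show φ⁻¹ (Pi.mulSingle i (φ (Pi.mulSingle i t) i)) i = t
  rw [autComp_single hφ i t]
  have h1 : φ⁻¹ (φ (Pi.mulSingle i t)) = Pi.mulSingle i t := by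
    rw [← MulAut.mul_apply, inv_mul_cancel, MulAut.one_apply]
  rw [h1, Pi.mulSingle_eq_same]

lemma ker_mem_inv {φ : MulAut (Fin m → T)} (hφ : φ ∈ (PhiHom hna (m := m)).ker) :
    φ⁻¹ ∈ (PhiHom hna (m := m)).ker := inv_mem hφ

/-- The injection of the kernel of `Φ` into `Aut(T)^m`. -/
noncomputable def PsiHom : (PhiHom hna (m := m)).ker →* (Fin m → MulAut T) :=
  MonoidHom.mk' (fun u => fun i =>
    { toFun := autComp u.1 i
      invFun := autComp u.1⁻¹ i
      left_inv := fun t => autComp_inverse (ker_fix hna u.2) i t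
      right_inv := fun t => by
        have h1 := autComp_inverse (ker_fix hna (ker_mem_inv hna u.2)) i t
        rwa [inv_inv] at h1
      map_mul' := autComp_mul u.1 i })
    (by
      intro u v
      funext i
      apply MulEquiv.toMonoidHom_injective
      apply MonoidHom.ext
      intro t
      show (u.1 * v.1) (Pi.mulSingle i t) i = u.1 (Pi.mulSingle i (v.1 (Pi.mulSingle i t) i)) i
      rw [autComp_single (ker_fix hna v.2) i t]
      rfl)

lemma PsiHom_injective : Function.Injective (PsiHom hna (m := m)) := by
  rw [← MonoidHom.ker_eq_bot_iff, eq_bot_iff]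
  intro u hu
  rw [MonoidHom.mem_ker] at hu
  rw [Subgroup.mem_bot]
  apply Subtype.ext
  apply MulEquiv.toMonoidHom_injective
  have h1 : ∀ (i : Fin m) (t : T), u.1 (Pi.mulSingle i t) i = t := by
    intro i t
    have h2 := congrFun hu i
    calc u.1 (Pi.mulSingle i t) i = (PsiHom hna u i) t := rfl
      _ = (1 : MulAut T) t := by rw [h2]; rfl
      _ = t := MulAut.one_apply T t
  apply MonoidHom.pi_ext
  intro i t
  show u.1 (Pi.mulSingle i t) = Pi.mulSingle i t
  rw [← autComp_single (ker_fix hna u.2) i t, h1 i t]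

end Struct

/-- If `T` is a finite nonabelian simple group with `3·a(T)^3·a(Aut T)^3 < |T|^3`, then no
abelian group `Γ` admits a regular embedding into `Hol(T^m)` for any `m ≥ 1`. -/
theorem no_abelian_regular_embedding {T : Type*} [Group T] [Finite T] [IsSimpleGroup T]
    (hna : ∃ a b : T, a * b ≠ b * a)
    (hineq : 3 * (maxAb T) ^ 3 * (maxAb (MulAut T)) ^ 3 < (Nat.card T) ^ 3)
    (m : ℕ) (hm : 1 ≤ m) (Γ : Type*) [CommGroup Γ] :
    ¬∃ β : Γ →* Hol (Fin m → T), Function.Injective β ∧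
        ∀ x y : Fin m → T, ∃! γ : Γ, holAct (β γ) x = y := by
  rintro ⟨β, hinj, hreg⟩
  classical
  haveI : Finite (Hol (Fin m → T)) :=
    Finite.of_injective (fun x : Hol (Fin m → T) => (x.left, x.right))
      (fun a b h => SemidirectProduct.ext (congrArg Prod.fst h) (congrArg Prod.snd h))
  haveI : Finite Γ := Finite.of_injective β hinj
  -- the cardinality of Γ
  have hbij : Function.Bijective (fun γ : Γ => holAct (β γ) 1) := by
    constructor
    · intro γ1 γ2 h
      exact ((hreg 1 (holAct (β γ2) 1)).unique h rfl)
    · intro y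
      obtain ⟨γ, hγ, _⟩ := hreg 1 y
      exact ⟨γ, hγ⟩
  set N := Nat.card T with hN
  set aT := maxAb T with haT
  set aA := maxAb (MulAut T) with haA
  set p := maxAb (Equiv.Perm (Fin m)) with hp
  have hcardΓ : Nat.card Γ = N ^ m := by
    rw [Nat.card_eq_of_bijective _ hbij, Nat.card_fun]
    congr 1
    simp
  -- abelian subgroup bounds
  have hb_piT : ∀ A : Subgroup (Fin m → T), IsMulCommutative A → Nat.card A ≤ aT ^ m := by
    intro A hA
    have h1 := pi_bound (fun _ : Fin m => aT) (fun i B hB => le_maxAb B hB) A hA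
    simpa [Finset.prod_const, Finset.card_univ] using h1
  have hb_piA : ∀ A : Subgroup (Fin m → MulAut T), IsMulCommutative A → Nat.card A ≤ aA ^ m := by
    intro A hA
    have h1 := pi_bound (fun _ : Fin m => aA) (fun i B hB => le_maxAb B hB) A hA
    simpa [Finset.prod_const, Finset.card_univ] using h1
  have hb_perm : ∀ C : Subgroup (Equiv.Perm (Fin m)), IsMulCommutative C → Nat.card C ≤ p :=
    fun C hC => le_maxAb C hC
  have hp3 : p ^ 3 ≤ 3 ^ m := by
    obtain ⟨C, hC, hCcard⟩ := maxAb_spec (Equiv.Perm (Fin m))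
    haveI := hC
    rw [hp, ← hCcard]
    refine abelian_faithful_card_cube_le m (Fin m) (by simp) C ?_ ?_
    · intro a b
      exact Subtype.ext (Subgroup.mul_comm_of_mem_isMulCommutative C a.2 b.2)
    · intro a ha
      apply Subtype.ext
      apply Equiv.ext
      intro x
      exact ha x
  have hb_ker_perm : ∀ A : Subgroup (MulAut (Fin m → T)), IsMulCommutative A →
      A ≤ (PhiHom hna (m := m)).ker → Nat.card A ≤ aA ^ m := by
    intro A hA hle
    haveI := hA
    refine card_le_of_faithful ((PsiHom hna).comp (Subgroup.inclusion hle)) ?_ ?_ _ hb_piA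
    · exact (PsiHom_injective hna).comp (Subgroup.inclusion_injective hle)
    · intro a b
      exact Subtype.ext (Subgroup.mul_comm_of_mem_isMulCommutative A a.2 b.2)
  have hb_aut : ∀ A : Subgroup (MulAut (Fin m → T)), IsMulCommutative A →
      Nat.card A ≤ aA ^ m * p :=
    card_le_mul (PhiHom hna) _ _ hb_ker_perm hb_perm
  have hb_hol_ker : ∀ A : Subgroup (Hol (Fin m → T)), IsMulCommutative A →
      A ≤ (SemidirectProduct.rightHom :
        Hol (Fin m → T) →* MulAut (Fin m → T)).ker → Nat.card A ≤ aT ^ m := by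
    intro A hA hle
    haveI := hA
    have hright : ∀ a : A, (a.1).right = 1 := by
      intro a
      have h1 := hle a.2
      rw [MonoidHom.mem_ker] at h1
      exact h1
    have hmul : ∀ a b : A, ((a * b : A) : Hol (Fin m → T)).left = (a.1).left * (b.1).left := by
      intro a b
      have h1 : ((a * b : A) : Hol (Fin m → T)).left
          = (a.1).left * ((MonoidHom.id (MulAut (Fin m → T))) (a.1).right) (b.1).left :=
        SemidirectProduct.mul_left a.1 b.1
      rw [h1, hright a]
      simp
    let θ : A →* (Fin m → T) := MonoidHom.mk' (fun a => (a.1).left) hmul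
    refine card_le_of_faithful θ ?_ ?_ _ hb_piT
    · intro a b h
      apply Subtype.ext
      apply SemidirectProduct.ext h
      rw [hright a, hright b]
    · intro a b
      exact Subtype.ext (Subgroup.mul_comm_of_mem_isMulCommutative A a.2 b.2)
  have hbB : Nat.card β.range ≤ aT ^ m * (aA ^ m * p) :=
    card_le_mul (SemidirectProduct.rightHom : Hol (Fin m → T) →* MulAut (Fin m → T)) _ _
      hb_hol_ker hb_aut β.range (isComm_range β mul_comm)
  have hcardB : Nat.card β.range = Nat.card Γ :=
    (Nat.card_congr (MonoidHom.ofInjective hinj).toEquiv).symm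
  have key : N ^ m ≤ aT ^ m * (aA ^ m * p) := by
    rw [← hcardΓ, ← hcardB]
    exact hbB
  have final : (N ^ m) ^ 3 < (N ^ m) ^ 3 := by
    calc (N ^ m) ^ 3 ≤ (aT ^ m * (aA ^ m * p)) ^ 3 := Nat.pow_le_pow_left key 3
      _ = (aT ^ m) ^ 3 * (aA ^ m) ^ 3 * p ^ 3 := by ring
      _ ≤ (aT ^ m) ^ 3 * (aA ^ m) ^ 3 * 3 ^ m := Nat.mul_le_mul_left _ hp3
      _ = (3 * aT ^ 3 * aA ^ 3) ^ m := by ring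
      _ < (N ^ 3) ^ m := Nat.pow_lt_pow_left hineq (by omega)
      _ = (N ^ m) ^ 3 := by ring
  exact lt_irrefl _ final
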